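/- arXiv:2311.01611 — 2 statements merged into one kernel-verified Lean document; each statement's English description precedes it below -/
import Mathlib

section
/- For an even positive integer q with q/2 ≡ m mod 2, and p coprime to q, the generalized quadratic Gauss sum G(-p, m, q) has absolute value √(2q). -/
open Complex Real Finset
open Complex Real Finset

/-- Generalized quadratic Gauss sum `G(a, b, c) = Σ_{n=0}^{c-1} exp(2πi(a n² + b n)/c)`. -/
noncomputable def gaussSum' (a b : ℤ) (c : ℕ) : ℂ :=
  ∑ n ∈ Finset.range c, Complex.exp (2 * Real.pi * Complex.I * ((a * n ^ 2 + b * n) / c))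

noncomputable def ee (x : ℂ) : ℂ := Complex.exp (2 * Real.pi * Complex.I * x)

lemma ee_add (x y : ℂ) : ee (x + y) = ee x * ee y := by
  simp [ee, mul_add, Complex.exp_add]

lemma ee_int (k : ℤ) : ee k = 1 := by
  rw [ee, show 2 * (Real.pi:ℂ) * Complex.I * k = k * (2 * Real.pi * Complex.I) by ring]
  exact Complex.exp_int_mul_two_pi_mul_I k

lemma ee_pow (x : ℂ) (n : ℕ) : ee x ^ n = ee (n * x) := by
  rw [ee, ee, ← Complex.exp_nat_mul]; ring_nf

lemma sum_ee (q : ℕ) (hq : 0 < q) (a : ℤ) :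
    ∑ n ∈ Finset.range q, ee ((a : ℂ) * n / q) = if (q:ℤ) ∣ a then (q:ℂ) else 0 := by
  have hq0 : (q:ℂ) ≠ 0 := Nat.cast_ne_zero.mpr hq.ne'
  have key : ∀ n : ℕ, ee ((a:ℂ) * n / q) = ee ((a:ℂ) / q) ^ n := by
    intro n; rw [ee_pow]; congr 1; field_simp
  simp_rw [key]
  split_ifs with hdvd
  · obtain ⟨k, hk⟩ := hdvd
    have : (a:ℂ)/q = (k:ℂ) := by rw [hk]; push_cast; field_simp
    simp [this, ee_int k]
  · have hne : ee ((a:ℂ) / q) ≠ 1 := by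
      intro h1
      rw [ee, Complex.exp_eq_one_iff] at h1
      obtain ⟨k, hk⟩ := h1
      have h3 : (2 * (Real.pi:ℂ) * Complex.I) ≠ 0 := by
        simp [Real.pi_ne_zero, Complex.I_ne_zero]
      have h4 : (a:ℂ)/q = (k:ℂ) := by
        apply mul_left_cancel₀ h3
        rw [hk]; ring
      have h2 : (a:ℂ) = k * q := by
        field_simp at h4; linear_combination h4
      have h5 : a = k * q := by exact_mod_cast h2
      exact hdvd ⟨k, by rw [h5, mul_comm]⟩
    rw [geom_sum_eq hne]
    have hpow : ee ((a:ℂ)/q) ^ q = 1 := by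
      rw [ee_pow, mul_div_cancel₀ _ hq0]; exact ee_int a
    rw [hpow]; simp

lemma conj_ee (B : ℤ) (q : ℕ) :
    (starRingEnd ℂ) (ee ((B:ℂ)/q)) = ee (((-B : ℤ):ℂ)/q) := by
  rw [ee, ee, ← Complex.exp_conj]
  congr 1
  rw [map_mul, map_mul, map_mul, map_div₀]
  simp [Complex.conj_I, map_ofNat]
  ring

lemma zmod_sum (q : ℕ) [NeZero q] (g : ℕ → ℂ) :
    ∑ x : ZMod q, g x.val = ∑ n ∈ Finset.range q, g n := by
  refine Finset.sum_nbij' (fun x => x.val) (fun n => (n : ZMod q)) ?_ ?_ ?_ ?_ ?_ <;>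
    simp [ZMod.val_lt, ZMod.val_natCast_of_lt, ZMod.natCast_val, ZMod.cast_id]
  · intro a ha; exact Nat.mod_eq_of_lt ha

theorem stmt2 (q : ℕ) (hq : 0 < q) (heven : Even q) (p : ℤ) (hp : IsCoprime p (q : ℤ))
    (m : ℤ) (hm : (q / 2 : ℤ) ≡ m [ZMOD 2]) :
    ‖gaussSum' (-p) m q‖ = Real.sqrt (2 * q) := by
  haveI : NeZero q := ⟨hq.ne'⟩
  obtain ⟨r, hr⟩ := heven
  have hr2 : q = 2 * r := by omega
  have hrpos : 0 < r := by omega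
  have hq0 : (q:ℂ) ≠ 0 := Nat.cast_ne_zero.mpr hq.ne'
  set f : ℤ → ℂ := fun a => ee (((-p*a^2 + m*a : ℤ):ℂ)/q) with hf
  -- periodicity
  have f_congr : ∀ a b : ℤ, a ≡ b [ZMOD (q:ℤ)] → f a = f b := by
    intro a b hab
    have h1 : (q:ℤ) ∣ a - b := (Int.ModEq.dvd hab.symm)
    have h2 : (q:ℤ) ∣ (-p*a^2 + m*a) - (-p*b^2 + m*b) := by
      have hEq : (-p*a^2 + m*a) - (-p*b^2 + m*b) = (a-b) * (-p*(a+b) + m) := by ring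
      rw [hEq]; exact h1.mul_right _
    obtain ⟨k, hk⟩ := h2
    have h3 : ((-p*a^2 + m*a : ℤ):ℂ)/q = ((-p*b^2 + m*b : ℤ):ℂ)/q + (k:ℂ) := by
      have hEq2 : ((-p*a^2 + m*a : ℤ):ℂ) = ((-p*b^2 + m*b : ℤ):ℂ) + (k:ℂ) * q := by
        have hc := congrArg (fun z : ℤ => (z:ℂ)) hk
        push_cast at hc ⊢
        linear_combination hc
      rw [hEq2, add_div, mul_div_cancel_right₀ _ hq0]
    simp only [hf]
    rw [h3, ee_add, ee_int, mul_one]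
  -- Gauss sum as sum over ZMod q
  have hG : gaussSum' (-p) m q = ∑ x : ZMod q, f ((x.val : ℤ)) := by
    rw [show (∑ x : ZMod q, f ((x.val : ℤ))) = ∑ n ∈ Finset.range q, f (n:ℤ) from
      zmod_sum q (fun n => f (n:ℤ))]
    unfold gaussSum'
    refine Finset.sum_congr rfl fun n _ => ?_
    simp only [hf, ee]
    congr 1
    push_cast
    ring
  set S := ∑ x : ZMod q, f ((x.val : ℤ)) with hS
  -- expansion of |S|^2
  have expand : ∑ h : ZMod q, ∑ y : ZMod q, f (((y+h).val : ℤ)) * (starRingEnd ℂ) (f (y.val : ℤ))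
      = S * (starRingEnd ℂ) S := by
    rw [Finset.sum_comm]
    have hrow : ∀ y : ZMod q, ∑ h : ZMod q, f (((y+h).val : ℤ)) * (starRingEnd ℂ) (f (y.val : ℤ))
        = S * (starRingEnd ℂ) (f (y.val : ℤ)) := by
      intro y
      rw [hS, Finset.sum_mul]
      exact Fintype.sum_equiv (Equiv.addLeft y) _ _ (fun h => rfl)
    simp_rw [hrow]
    rw [← Finset.mul_sum, ← map_sum]
  -- inner sum evaluation
  have inner : ∀ h : ZMod q, ∑ y : ZMod q, f (((y+h).val : ℤ)) * (starRingEnd ℂ) (f (y.val : ℤ))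
      = ee (((-p*(h.val:ℤ)^2 + m*(h.val:ℤ) : ℤ):ℂ)/q)
        * (if (q:ℤ) ∣ (-2*p*(h.val:ℤ)) then (q:ℂ) else 0) := by
    intro h
    have term : ∀ y : ZMod q, f (((y+h).val : ℤ)) * (starRingEnd ℂ) (f (y.val : ℤ))
        = ee (((-p*(h.val:ℤ)^2 + m*(h.val:ℤ) : ℤ):ℂ)/q)
          * ee (((-2*p*(h.val:ℤ) : ℤ):ℂ) * (y.val : ℕ) / q) := by
      intro y
      have h1 : f (((y+h).val : ℤ)) = f ((y.val : ℤ) + (h.val : ℤ)) := by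
        apply f_congr
        rw [ZMod.val_add]
        push_cast
        exact Int.emod_emod_of_dvd _ dvd_rfl
      rw [h1]
      simp only [hf]
      rw [conj_ee, ← ee_add, ← ee_add]
      congr 1
      push_cast
      field_simp
      ring
    simp_rw [term]
    rw [← Finset.mul_sum]
    congr 1
    rw [zmod_sum q (fun n => ee (((-2*p*(h.val:ℤ) : ℤ):ℂ) * (n:ℕ) / q))]
    exact sum_ee q hq _
  -- the divisibility condition picks out h = 0 and h = r
  have hpr : IsCoprime p (r:ℤ) := by
    apply hp.of_isCoprime_of_dvd_right
    exact ⟨2, by push_cast [hr2]; ring⟩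
  have dvd_iff : ∀ h : ZMod q, ((q:ℤ) ∣ (-2*p*(h.val:ℤ))) ↔ (h = 0 ∨ h = (r : ZMod q)) := by
    intro h
    have step1 : ((q:ℤ) ∣ (-2*p*(h.val:ℤ))) ↔ ((r:ℤ) ∣ (h.val:ℤ)) := by
      rw [show (-2*p*(h.val:ℤ)) = -(2*(p*(h.val:ℤ))) from by ring, dvd_neg,
        show ((q:ℕ):ℤ) = 2*(r:ℤ) from by push_cast [hr2]; ring,
        mul_dvd_mul_iff_left (two_ne_zero (α := ℤ))]
      constructor
      · intro hd
        exact (hpr.symm).dvd_of_dvd_mul_left hd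
      · intro hd
        exact hd.mul_left p
    rw [step1, Int.natCast_dvd_natCast]
    constructor
    · rintro ⟨t, ht⟩
      have hvlt : h.val < q := ZMod.val_lt h
      have ht2 : t < 2 := by
        by_contra hc
        push_neg at hc
        have : 2 * r ≤ r * t := by
          calc 2 * r = r * 2 := by ring
          _ ≤ r * t := Nat.mul_le_mul_left r hc
        omega
      interval_cases t
      · left
        rw [← ZMod.val_eq_zero]
        omega
      · right
        have hv : h.val = r := by omega
        rw [← ZMod.natCast_rightInverse h, hv]
    · rintro (rfl | rfl)
      · simp [ZMod.val_zero]
      · rw [ZMod.val_natCast_of_lt (by omega : r < q)]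
  -- p is odd
  have hp2 : IsCoprime p (2:ℤ) := by
    apply hp.of_isCoprime_of_dvd_right
    exact ⟨r, by push_cast [hr2]; ring⟩
  have podd : ¬ (2:ℤ) ∣ p := by
    intro hd
    have : IsUnit (2:ℤ) := hp2.isUnit_of_dvd' hd dvd_rfl
    rw [Int.isUnit_iff] at this
    omega
  obtain ⟨k, hk⟩ : ∃ k : ℤ, p = 2*k + 1 := by
    rcases Int.even_or_odd p with he | ho
    · exact absurd he.two_dvd podd
    · obtain ⟨k, hk⟩ := ho; exact ⟨k, hk⟩
  -- m ≡ r mod 2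
  have hqdiv : (q:ℤ)/2 = (r:ℤ) := by
    rw [show ((q:ℕ):ℤ) = 2*(r:ℤ) from by push_cast [hr2]; ring]
    exact Int.mul_ediv_cancel_left _ two_ne_zero
  obtain ⟨t, ht⟩ : (2:ℤ) ∣ m - r := by
    have := (Int.ModEq.dvd hm)
    rwa [hqdiv] at this
  have hmr : m = 2*t + r := by omega
  -- evaluate the total sum
  have total : S * (starRingEnd ℂ) S = (2*(q:ℕ) : ℂ) := by
    rw [← expand]
    rw [Finset.sum_congr rfl (fun h _ => inner h)]
    have hsub : ({0, (r : ZMod q)} : Finset (ZMod q)) ⊆ Finset.univ := Finset.subset_univ _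
    rw [← Finset.sum_subset hsub (by
      intro h _ hnot
      have : ¬ ((q:ℤ) ∣ (-2*p*(h.val:ℤ))) := by
        rw [dvd_iff h]
        simpa [Finset.mem_insert, Finset.mem_singleton] using hnot
      rw [if_neg this, mul_zero])]
    have hne : (0 : ZMod q) ≠ (r : ZMod q) := by
      intro hc
      have : ((r : ZMod q)).val = r := ZMod.val_natCast_of_lt (by omega : r < q)
      rw [← hc, ZMod.val_zero] at this
      omega
    rw [Finset.sum_pair hne]
    -- term at 0
    have t0 : ee (((-p*((0:ZMod q).val:ℤ)^2 + m*((0:ZMod q).val:ℤ) : ℤ):ℂ)/q)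
        * (if (q:ℤ) ∣ (-2*p*((0:ZMod q).val:ℤ)) then (q:ℂ) else 0) = (q:ℂ) := by
      rw [ZMod.val_zero]
      rw [if_pos (by simp)]
      norm_num
      simp [ee]
    -- term at r
    have tr : ee (((-p*(((r:ZMod q)).val:ℤ)^2 + m*(((r:ZMod q)).val:ℤ) : ℤ):ℂ)/q)
        * (if (q:ℤ) ∣ (-2*p*(((r:ZMod q)).val:ℤ)) then (q:ℂ) else 0) = (q:ℂ) := by
      have hv : ((r : ZMod q)).val = r := ZMod.val_natCast_of_lt (by omega : r < q)
      rw [hv]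
      rw [if_pos ⟨-p, by push_cast [hr2]; ring⟩]
      have hnum : (-p*(r:ℤ)^2 + m*(r:ℤ)) = (q:ℤ) * ((t - k*r):ℤ) := by
        rw [hk, hmr, show ((q:ℕ):ℤ) = 2*(r:ℤ) from by push_cast [hr2]; ring]
        ring
      have harg : ((-p*(r:ℤ)^2 + m*(r:ℤ) : ℤ):ℂ)/q = (((t - k*r : ℤ)):ℂ) := by
        rw [hnum]
        push_cast
        field_simp
      rw [harg, ee_int, one_mul]
    rw [t0, tr]
    ring
  -- conclude
  have hnormSq : Complex.normSq S = 2*(q:ℕ) := by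
    have hcast : (Complex.normSq S : ℂ) = (2*(q:ℕ) : ℂ) := by
      rw [← Complex.mul_conj]; exact total
    exact_mod_cast hcast
  rw [hG, Complex.norm_def, hnormSq]
end

section
/- Let q be an odd positive integer, p coprime to q, and φ(p) the inverse of 4p modulo q. Then for every integer m, G(-p, m+1, q) · conj(G(-p, m, q)) / q = exp(2πi·φ(p)·(2m+1)/q), where G is the generalized quadratic Gauss sum. -/
open Complex Real Finset

noncomputable def qe (q : ℕ) (N : ℤ) : ℂ := Complex.exp (2 * Real.pi * Complex.I * ((N : ℂ) / q))

lemma qe_add (q : ℕ) (a b : ℤ) : qe q (a + b) = qe q a * qe q b := by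
  rw [qe, qe, qe, ← Complex.exp_add]
  congr 1
  push_cast
  ring

lemma qe_int_mul (q : ℕ) (hq : q ≠ 0) (c : ℤ) : qe q (c * q) = 1 := by
  rw [qe]
  have hqC : (q : ℂ) ≠ 0 := Nat.cast_ne_zero.mpr hq
  have : 2 * (Real.pi : ℂ) * Complex.I * (((c * q : ℤ) : ℂ) / q) = c * (2 * Real.pi * Complex.I) := by
    push_cast
    field_simp
  rw [this, Complex.exp_int_mul_two_pi_mul_I]

lemma qe_congr (q : ℕ) (hq : q ≠ 0) {a b : ℤ} (h : (a : ZMod q) = (b : ZMod q)) :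
    qe q a = qe q b := by
  have h2 : (q : ℤ) ∣ b - a := ((ZMod.intCast_eq_intCast_iff a b q).mp h).dvd
  obtain ⟨c, hc⟩ := h2
  have : b = a + c * q := by linarith
  rw [this, qe_add, qe_int_mul q hq, mul_one]

lemma qe_pow (q : ℕ) (c : ℤ) (k : ℕ) : qe q (c * k) = (qe q c) ^ k := by
  induction k with
  | zero => simp [qe]
  | succ n ih =>
    have : c * ((n + 1 : ℕ) : ℤ) = c * n + c := by push_cast; ring
    rw [this, qe_add, ih, pow_succ]

lemma conj_qe (q : ℕ) (N : ℤ) : (starRingEnd ℂ) (qe q N) = qe q (-N) := by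
  rw [qe, qe, ← Complex.exp_conj]
  congr 1
  simp only [map_mul, map_div₀, Complex.conj_I, Complex.conj_ofReal, map_ofNat,
    map_intCast, map_natCast]
  push_cast
  ring

lemma qe_sum (q : ℕ) (hq : q ≠ 0) (c : ℤ) :
    ∑ k ∈ Finset.range q, qe q (c * k) = if (q : ℤ) ∣ c then (q : ℂ) else 0 := by
  split_ifs with h
  · have : ∀ k ∈ Finset.range q, qe q (c * k) = 1 := by
      intro k _
      have : qe q (c * k) = qe q 0 := by
        apply qe_congr q hq
        have : (q : ℤ) ∣ c * k := Dvd.dvd.mul_right h k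
        simpa using (ZMod.intCast_zmod_eq_zero_iff_dvd _ q).mpr this
      rw [this, qe]; simp
    rw [Finset.sum_congr rfl this]
    simp
  · have hne : qe q c ≠ 1 := by
      intro hc
      rw [qe] at hc
      rw [Complex.exp_eq_one_iff] at hc
      obtain ⟨n, hn⟩ := hc
      have hqC : (q : ℂ) ≠ 0 := Nat.cast_ne_zero.mpr hq
      have h2 : (2 * (Real.pi:ℂ) * Complex.I) ≠ 0 := by
        simp [Real.pi_ne_zero, Complex.I_ne_zero, Complex.ofReal_ne_zero]
      have : (c : ℂ) / q = n := by
        have := hn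
        rw [mul_comm (n:ℂ) _] at this
        exact mul_left_cancel₀ h2 this
      have : (c : ℂ) = n * q := by field_simp at this; linear_combination this
      have : c = n * q := by exact_mod_cast this
      exact h ⟨n, by linarith⟩
    have hterm : ∀ k ∈ Finset.range q, qe q (c * k) = (qe q c) ^ k := fun k _ => qe_pow q c k
    rw [Finset.sum_congr rfl hterm, geom_sum_eq hne q]
    have : (qe q c) ^ q = 1 := by rw [← qe_pow, qe_int_mul q hq]
    rw [this]
    simp

lemma sum_range_zmod (q : ℕ) [NeZero q] (f : ℤ → ℂ)
    (hf : ∀ a b : ℤ, (a : ZMod q) = (b : ZMod q) → f a = f b) :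
    ∑ n ∈ Finset.range q, f n = ∑ x : ZMod q, f x.val := by
  refine Finset.sum_nbij' (fun n => (n : ZMod q)) (fun x => x.val) ?_ ?_ ?_ ?_ ?_
  · intro a _; exact Finset.mem_univ _
  · intro x _; exact Finset.mem_range.mpr (ZMod.val_lt x)
  · intro a ha; exact ZMod.val_cast_of_lt (Finset.mem_range.mp ha)
  · intro x _; simp [ZMod.natCast_val, ZMod.cast_id]
  · intro a _
    apply hf
    push_cast
    simp [ZMod.natCast_val, ZMod.cast_id]

lemma val_cast_zmod (q : ℕ) [NeZero q] (x : ZMod q) : ((x.val : ℕ) : ZMod q) = x := by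
  rw [ZMod.natCast_val, ZMod.cast_id]

theorem stmt4 (q : ℕ) (hq : 0 < q) (hodd : Odd q) (p : ℤ) (hp : IsCoprime p (q : ℤ))
    (φp : ℤ) (hφ : 4 * p * φp ≡ 1 [ZMOD (q : ℤ)]) (m : ℤ) :
    gaussSum' (-p) (m + 1) q * (starRingEnd ℂ) (gaussSum' (-p) m q) / q =
      Complex.exp (2 * Real.pi * Complex.I * (φp * (2 * m + 1) / q)) := by
  haveI : NeZero q := ⟨hq.ne'⟩
  have hqne : q ≠ 0 := hq.ne'
  have hqC : (q : ℂ) ≠ 0 := Nat.cast_ne_zero.mpr hqne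
  have hunit : ((4 * p * φp : ℤ) : ZMod q) = 1 := by
    have := (ZMod.intCast_eq_intCast_iff (4 * p * φp) 1 q).mpr hφ
    simpa using this
  have hG : ∀ b : ℤ, gaussSum' (-p) b q = ∑ n ∈ Finset.range q, qe q (-p * n ^ 2 + b * n) := by
    intro b
    unfold gaussSum'
    refine Finset.sum_congr rfl fun n _ => ?_
    rw [qe]
    congr 1
    push_cast
    ring
  set x₀ : ZMod q := ((2 * φp : ℤ) : ZMod q) with hx₀
  have key : gaussSum' (-p) (m + 1) q * (starRingEnd ℂ) (gaussSum' (-p) m q)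
      = q * qe q (φp * (2 * m + 1)) := by
    rw [hG, hG, map_sum, Finset.sum_mul_sum]
    have hterm : ∀ n k : ℕ,
        qe q (-p * n ^ 2 + (m + 1) * n) * (starRingEnd ℂ) (qe q (-p * k ^ 2 + m * k))
        = qe q ((-p * n ^ 2 + (m + 1) * n) + (p * k ^ 2 - m * k)) := by
      intro n k
      rw [conj_qe, ← qe_add]
      congr 1
      ring
    have hfA : ∀ y : ZMod q, ∀ a b : ℤ, (a : ZMod q) = (b : ZMod q) →
        qe q (-p * a ^ 2 + (m + 1) * a + (p * (y.val : ℤ) ^ 2 - m * y.val))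
        = qe q (-p * b ^ 2 + (m + 1) * b + (p * (y.val : ℤ) ^ 2 - m * y.val)) := by
      intro y a b hab
      apply qe_congr q hqne
      push_cast [hab]
      ring
    have hfK : ∀ a b : ℤ, (a : ZMod q) = (b : ZMod q) →
        (∑ n ∈ Finset.range q, qe q (-p * n ^ 2 + (m + 1) * n + (p * a ^ 2 - m * a)))
        = ∑ n ∈ Finset.range q, qe q (-p * n ^ 2 + (m + 1) * n + (p * b ^ 2 - m * b)) := by
      intro a b hab
      refine Finset.sum_congr rfl fun n _ => qe_congr q hqne ?_
      push_cast [hab]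
      ring
    calc (∑ n ∈ Finset.range q, ∑ k ∈ Finset.range q,
            qe q (-p * n ^ 2 + (m + 1) * n) * (starRingEnd ℂ) (qe q (-p * k ^ 2 + m * k)))
        = ∑ k ∈ Finset.range q, ∑ n ∈ Finset.range q,
            qe q ((-p * n ^ 2 + (m + 1) * n) + (p * k ^ 2 - m * k)) := by
          rw [Finset.sum_comm]
          exact Finset.sum_congr rfl fun k _ => Finset.sum_congr rfl fun n _ => hterm n k
      _ = ∑ y : ZMod q, ∑ x : ZMod q,
            qe q ((-p * (x.val : ℤ) ^ 2 + (m + 1) * x.val) + (1 - 2 * p * x.val) * y.val) := by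
          rw [sum_range_zmod q _ hfK]
          refine Finset.sum_congr rfl fun y _ => ?_
          rw [sum_range_zmod q _ (hfA y)]
          refine Fintype.sum_equiv (Equiv.subRight y) _ _ fun x => ?_
          apply qe_congr q hqne
          simp only [Equiv.subRight_apply]
          have hx := val_cast_zmod q x
          have hy := val_cast_zmod q y
          have hu := val_cast_zmod q (x - y)
          push_cast
          rw [hx, hy, hu]
          ring
      _ = ∑ x : ZMod q, qe q (-p * (x.val : ℤ) ^ 2 + (m + 1) * x.val)
            * ∑ y : ZMod q, qe q ((1 - 2 * p * x.val) * y.val) := by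
          rw [Finset.sum_comm]
          refine Finset.sum_congr rfl fun x _ => ?_
          rw [Finset.mul_sum]
          exact Finset.sum_congr rfl fun y _ => qe_add q _ _
      _ = ∑ x : ZMod q, qe q (-p * (x.val : ℤ) ^ 2 + (m + 1) * x.val)
            * (if x = x₀ then (q : ℂ) else 0) := by
          refine Finset.sum_congr rfl fun x _ => ?_
          congr 1
          have hf : ∀ a b : ℤ, (a : ZMod q) = (b : ZMod q) →
              qe q ((1 - 2 * p * (x.val : ℤ)) * a) = qe q ((1 - 2 * p * (x.val : ℤ)) * b) := by
            intro a b hab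
            apply qe_congr q hqne
            push_cast [hab]
            ring
          rw [← sum_range_zmod q _ hf, qe_sum q hqne]
          have hx := val_cast_zmod q x
          congr 1
          rw [← ZMod.intCast_zmod_eq_zero_iff_dvd, eq_iff_iff]
          constructor
          · intro h
            push_cast at h
            rw [hx] at h
            -- h : 1 - 2 * p * x = 0 in ZMod q
            have h2 : (2 * (p : ZMod q)) * x = 1 := by linear_combination -h
            push_cast at hunit
            have : x = (2 * (φp : ZMod q)) * ((2 * (p : ZMod q)) * x) := by
              linear_combination -x * hunit
            rw [h2, mul_one] at this
            rw [hx₀, this]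
            push_cast
            ring
          · intro h
            push_cast
            rw [hx, h, hx₀]
            push_cast
            push_cast at hunit
            linear_combination -hunit
      _ = q * qe q (φp * (2 * m + 1)) := by
          have hsplit : ∀ x : ZMod q, qe q (-p * (x.val : ℤ) ^ 2 + (m + 1) * x.val)
              * (if x = x₀ then (q : ℂ) else 0)
              = if x = x₀ then qe q (-p * (x.val : ℤ) ^ 2 + (m + 1) * x.val) * q else 0 := by
            intro x
            split_ifs <;> simp
          rw [Finset.sum_congr rfl fun x _ => hsplit x, Finset.sum_ite_eq' Finset.univ x₀]
          simp only [Finset.mem_univ, if_true]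
          have hval : qe q (-p * (x₀.val : ℤ) ^ 2 + (m + 1) * x₀.val)
              = qe q (φp * (2 * m + 1)) := by
            apply qe_congr q hqne
            have hv : ((x₀.val : ℕ) : ZMod q) = ((2 * φp : ℤ) : ZMod q) := by
              rw [val_cast_zmod q x₀, hx₀]
            push_cast at hv hunit ⊢
            linear_combination (-(p : ZMod q) * ((x₀.val : ZMod q) + 2 * φp) + (m + 1)) * hv
              - (φp : ZMod q) * hunit
          rw [hval]
          ring
  rw [key, mul_div_cancel_left₀ _ hqC, qe]
  congr 1
  push_cast
  ring
end
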